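/- For every n there exists a (0,1)-BAPO solving the Index problem on all instances with an n-bit string, i.e., a BAPO with prefix bandwidth 0 and attention bandwidth 1 whose suffix oracle always outputs the indexed bit. -/

import Mathlib

open Finset Filter Asymptotics

/-- An `(a, b)`-BAPO (bounded attention prefix oracle): a prefix oracle `f` outputting
`a` bits, a binary attention function `g`, and a suffix oracle `h` that receives the
prefix-oracle output, an attended set of at most `b` (token, 1-based index) pairs from
the prefix, the suffix, and the split index. -/
structure BAPO (Sigma : Type) (Out : Type) (a b : ℕ) where
  f : List Sigma → (Fin a → Bool)
  g : List Sigma → ℕ → Sigma → ℕ → Bool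
  h : (Fin a → Bool) → Finset (Sigma × ℕ) → List Sigma → ℕ → Out

namespace BAPO

variable {Sigma Out : Type} {a b : ℕ}

/-- The set `𝔾 = {(xᵢ, i) : 1 ≤ i ≤ k, g(suffix, k, xᵢ, i) = 1}` of attended
candidates for a given prefix and suffix. -/
noncomputable def cands (M : BAPO Sigma Out a b) (pre suf : List Sigma) :
    Finset (Sigma × ℕ) :=
  letI := Classical.decEq Sigma
  (Finset.univ.filter fun i : Fin pre.length =>
      M.g suf pre.length (pre.get i) ((i : ℕ) + 1) = true).image
    fun i => (pre.get i, (i : ℕ) + 1)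

/-- The BAPO outputs `y` on input `x`: for every split index `k < |x|` and every
attended set `G ⊆ 𝔾` with `|G| = min b |𝔾|`, the suffix oracle outputs `y`. -/
def SolvesOn (M : BAPO Sigma Out a b) (x : List Sigma) (y : Out) : Prop :=
  ∀ k, k < x.length →
    ∀ G : Finset (Sigma × ℕ), G ⊆ M.cands (x.take k) (x.drop k) →
      G.card = min b (M.cands (x.take k) (x.drop k)).card →
      M.h (M.f (x.take k)) G (x.drop k) k = y

end BAPO

/-- **Index is BAPO-easy.** For every `n` there is a `(0, 1)`-BAPO solving the
`Index` problem: on the instance `x₁ … xₙ i` (an `n`-bit string over tokens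
`Sum.inl` followed by an index token `Sum.inr i`), the BAPO always outputs the
indexed bit `x i`. -/

def indexBAPO (n : ℕ) : BAPO (Bool ⊕ Fin n) Bool 0 1 where
  f := fun _ => Fin.elim0
  g := fun suf _ _ j =>
    match suf.getLast? with
    | some (Sum.inr i) => j == i.val + 1
    | _ => false
  h := fun _ G suf k =>
    match suf.getLast? with
    | some (Sum.inr i) =>
      if i.val < k then decide ((Sum.inl true, i.val + 1) ∈ G)
      else
        match suf[i.val - k]? with
        | some (Sum.inl b) => b
        | _ => false
    | _ => false

theorem index_has_zero_one_BAPO (n : ℕ) :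
    ∃ M : BAPO (Bool ⊕ Fin n) Bool 0 1,
      ∀ (x : Fin n → Bool) (i : Fin n),
        M.SolvesOn (List.ofFn (fun j => Sum.inl (x j)) ++ [Sum.inr i]) (x i) := by
  classical
  refine ⟨indexBAPO n, ?_⟩
  intro x i k hk G hG hcard
  set A : List (Bool ⊕ Fin n) := List.ofFn (fun j => Sum.inl (x j)) with hA
  have hAlen : A.length = n := by simp [hA]
  have hklen : k ≤ n := by
    have := hk
    simp [hA, List.length_append, hAlen] at this
    omega
  have hpre : (A ++ [Sum.inr i]).take k = A.take k := by
    rw [List.take_append_of_le_length (by omega)]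
  have hdrop : (A ++ [Sum.inr i]).drop k = A.drop k ++ [Sum.inr i] := by
    rw [List.drop_append_of_le_length (by omega)]
  have hlast : ((A ++ [Sum.inr i]).drop k).getLast? = some (Sum.inr i) := by
    rw [hdrop, List.getLast?_concat]
  have hprelen : (A.take k).length = k := by
    simp [hAlen, hklen]
  have hlast' : (A.drop k ++ [Sum.inr i]).getLast? = some (Sum.inr i) :=
    List.getLast?_concat
  rw [hpre, hdrop] at hG hcard ⊢
  have hcands : (indexBAPO n).cands (A.take k) (A.drop k ++ [Sum.inr i]) =
      if i.val < k then {((Sum.inl (x i) : Bool ⊕ Fin n), i.val + 1)} else ∅ := by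
    ext ⟨s, j⟩
    simp only [BAPO.cands, indexBAPO, hlast', Finset.mem_image, Finset.mem_filter,
      Finset.mem_univ, true_and, beq_iff_eq, Nat.add_right_cancel_iff]
    constructor
    · rintro ⟨a, ha, rfl, rfl⟩
      have halt : a.val < k := by have := a.isLt; omega
      have : (A.take k).get a = Sum.inl (x i) := by
        rw [List.get_eq_getElem, List.getElem_take]
        · simp [hA, ha]
      rw [this, ha]
      have hik : i.val < k := by omega
      simp [hik]
    · intro hsj
      by_cases hik : i.val < k
      · simp only [hik, if_true, Finset.mem_singleton, Prod.mk.injEq] at hsj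
        have h1 : (A.take k).get ⟨i.val, by omega⟩ = Sum.inl (x i) := by
          rw [List.get_eq_getElem, List.getElem_take]
          simp [hA]
        obtain ⟨rfl, rfl⟩ := hsj
        exact ⟨⟨i.val, by omega⟩, rfl, by rw [h1]⟩
      · simp [hik] at hsj
  by_cases hik : i.val < k
  · rw [hcands, if_pos hik] at hG hcard
    have hGeq : G = {((Sum.inl (x i) : Bool ⊕ Fin n), i.val + 1)} := by
      rcases Finset.subset_singleton_iff.mp hG with h | h
      · exfalso; rw [h] at hcard; simp at hcard
      · exact h
    subst hGeq
    show (indexBAPO n).h _ _ _ _ = x i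
    simp only [indexBAPO, hlast', hik, if_pos]
    simp only [Finset.mem_singleton, Prod.mk.injEq, and_true]
    cases hxi : x i <;> simp
  · rw [hcands, if_neg hik] at hG hcard
    have hGeq : G = ∅ := Finset.subset_empty.mp hG
    subst hGeq
    show (indexBAPO n).h _ _ _ _ = x i
    simp only [indexBAPO, hlast', hik, if_neg, if_false]
    have hlt : i.val - k < (A.drop k).length := by
      simp [hAlen]; omega
    rw [List.getElem?_append_left hlt, List.getElem?_drop]
    have : k + (i.val - k) = i.val := by omega
    rw [this]
    simp [hA]
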